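/- Let x ∈ W (Hermitian G-representation) and θ ∈ Z(𝔥). Suppose the Kempf–Ness function φ^{θ,x}(g) = ||g.x||² − log|χ^θ(g)|² has a critical point at the identity. Then for every h ∈ H and Y ∈ 𝔥, φ^{θ,x}(h·exp(iY)) − φ^{θ,x}(Id) = Σ_j (exp(2λ_j) − 2λ_j − 1)|p(e_j, x)|² ≥ 0, where (e_j) is an orthonormal basis of eigenvectors of the Hermitian operator iY with eigenvalues λ_j. In particular the identity is a global minimum of φ^{θ,x}, and equality φ^{θ,x}(h·exp(iY)) = φ^{θ,x}(Id) holds if and only if exp(iY).x = x. -/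

import Mathlib

/-- Kempf–Ness convexity formula: if the Kempf–Ness function `φ^{θ,x}` is critical at the
identity, then for any unitary `h` and any `Y ∈ 𝔥` (with `(e_j)` an orthonormal eigenbasis of
the Hermitian operator `iY`, eigenvalues `λ_j`, and `A` the action of `exp(iY)`, and
`2c = log|χ^θ(exp(iY))|² = 2⟨θ,Y⟩`),
`φ^{θ,x}(h·exp(iY)) − φ^{θ,x}(Id) = ‖h(Ax)‖² − 2c − ‖x‖²
  = ∑_j (e^{2λ_j} − 2λ_j − 1)|⟨e_j,x⟩|² ≥ 0`,
with equality iff `exp(iY).x = x`; in particular the identity is a global minimum. -/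
theorem stmt_6 {W ι : Type*} [NormedAddCommGroup W] [InnerProductSpace ℂ W]
    [Fintype ι]
    (e : OrthonormalBasis ι ℂ W) (x : W) (lam : ι → ℝ) (c : ℝ)
    (A : W →ₗ[ℂ] W) (hA : ∀ j, A (e j) = (Real.exp (lam j) : ℂ) • e j)
    (h : W →ₗᵢ[ℂ] W)
    (hcrit : ∑ j, 2 * lam j * ‖(inner ℂ (e j) x : ℂ)‖ ^ 2 = 2 * c) :
    ‖h (A x)‖ ^ 2 - 2 * c - ‖x‖ ^ 2
        = ∑ j, (Real.exp (2 * lam j) - 2 * lam j - 1) * ‖(inner ℂ (e j) x : ℂ)‖ ^ 2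
      ∧ 0 ≤ ‖h (A x)‖ ^ 2 - 2 * c - ‖x‖ ^ 2
      ∧ (‖h (A x)‖ ^ 2 - 2 * c - ‖x‖ ^ 2 = 0 ↔ A x = x) := by
  -- notation
  classical
  set a : ι → ℝ := fun j => ‖(inner ℂ (e j) x : ℂ)‖ ^ 2 with ha
  -- norm of any vector via the orthonormal basis
  have hnorm : ∀ v : W, ‖v‖ ^ 2 = ∑ j, ‖e.repr v j‖ ^ 2 := by
    intro v
    rw [← e.repr.norm_map v, EuclideanSpace.norm_eq, Real.sq_sqrt]
    positivity
  -- coordinates of A x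
  have hortho := orthonormal_iff_ite.mp e.orthonormal
  have hAx : ∀ j, e.repr (A x) j = (Real.exp (lam j) : ℂ) * e.repr x j := by
    classical
    intro j
    rw [e.repr_apply_apply]
    conv_lhs => rw [← e.sum_repr x]
    rw [map_sum, inner_sum]
    simp only [map_smul, hA, inner_smul_right, smul_eq_mul, hortho, mul_ite, mul_one,
      mul_zero, Finset.sum_ite_eq, Finset.mem_univ, if_true]
    rw [e.repr_apply_apply]
    ring
  have hrepr : ∀ j, e.repr x j = (inner ℂ (e j) x : ℂ) := fun j =>
    e.repr_apply_apply x j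
  have hnormAx : ‖h (A x)‖ ^ 2 = ∑ j, Real.exp (2 * lam j) * a j := by
    rw [h.norm_map, hnorm]
    refine Finset.sum_congr rfl fun j _ => ?_
    have he2 : Real.exp (lam j) ^ 2 = Real.exp (2 * lam j) := by
      rw [two_mul, Real.exp_add, sq]
    rw [hAx j, norm_mul, mul_pow, hrepr, Complex.norm_real, Real.norm_eq_abs, Real.abs_exp, he2, ha]
  have hnormx : ‖x‖ ^ 2 = ∑ j, a j := by
    rw [hnorm]
    exact Finset.sum_congr rfl fun j _ => by rw [hrepr, ha]
  have hmain : ‖h (A x)‖ ^ 2 - 2 * c - ‖x‖ ^ 2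
      = ∑ j, (Real.exp (2 * lam j) - 2 * lam j - 1) * a j := by
    rw [hnormAx, hnormx, ← hcrit]
    rw [← Finset.sum_sub_distrib, ← Finset.sum_sub_distrib]
    exact Finset.sum_congr rfl fun j _ => by simp [ha]; ring
  have hterm : ∀ j, 0 ≤ (Real.exp (2 * lam j) - 2 * lam j - 1) * a j := by
    intro j
    have := Real.add_one_le_exp (2 * lam j)
    have ha0 : 0 ≤ a j := by positivity
    nlinarith
  have hnonneg : 0 ≤ ‖h (A x)‖ ^ 2 - 2 * c - ‖x‖ ^ 2 := by
    rw [hmain]; exact Finset.sum_nonneg fun j _ => hterm j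
  refine ⟨hmain, hnonneg, ?_⟩
  rw [hmain]
  rw [Finset.sum_eq_zero_iff_of_nonneg fun j _ => hterm j]
  -- A x = x iff coordinates agree
  have hcoord : A x = x ↔ ∀ j, (Real.exp (lam j) : ℂ) * e.repr x j = e.repr x j := by
    constructor
    · intro hax j; rw [← hAx j, hax]
    · intro hj
      apply e.repr.injective
      ext j
      rw [hAx j, hj j]
  rw [hcoord]
  constructor
  · intro H j
    have Hj := H j (Finset.mem_univ j)
    rcases mul_eq_zero.mp Hj with h1 | h2
    · -- exp(2λ) - 2λ - 1 = 0 forces λ = 0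
      have hlj : lam j = 0 := by
        by_contra hne
        have : 2 * lam j ≠ 0 := by simpa using hne
        have := Real.add_one_lt_exp this
        linarith
      rw [hlj]; simp
    · have : e.repr x j = 0 := by
        have := hrepr j
        rw [this]
        simpa [ha] using h2
      rw [this]; ring
  · intro H j _
    have Hj := H j
    by_cases hlj : lam j = 0
    · simp [hlj]
    · have : e.repr x j = 0 := by
        have hz : ((Real.exp (lam j) : ℂ) - 1) * e.repr x j = 0 := by
          rw [sub_mul, one_mul, Hj, sub_self]
        rcases mul_eq_zero.mp hz with h1 | h2
        · exfalso
          have h1' : (Real.exp (lam j) : ℂ) = 1 := by linear_combination h1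
          rw [show (1 : ℂ) = ((1 : ℝ) : ℂ) by norm_num, Complex.ofReal_inj] at h1'
          exact hlj (Real.exp_eq_exp.mp (by rw [h1', Real.exp_zero]) : lam j = 0)
        · exact h2
      have : a j = 0 := by
        rw [ha]; simp [← hrepr j, this]
      rw [this]; ring
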